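/- arXiv:math/0110077 — 2 statements merged into one kernel-verified Lean document; each statement's English description precedes it below -/
import Mathlib

section
/- Let λ be a partition with ℓ(λ) ≤ l and Frobenius coordinates (p₁,…,p_d | q₁,…,q_d). Then in the field ℂ(u) of rational functions in one variable u: ∏_{i=1}^{l} (u+i)/(u+i−λᵢ) = ∏_{(i,j)∈λ} (u−c(i,j)+1)/(u−c(i,j)) = ∏_{i=1}^{d} (u+qᵢ+1)/(u−pᵢ). -/
open Finset

noncomputable section

/-- `μ : ℕ → ℕ` (0-indexed: `μ i` is the `(i+1)`-st part) is a partition. -/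
def IsPartition (μ : ℕ → ℕ) : Prop := Antitone μ ∧ ∃ N, ∀ i, N ≤ i → μ i = 0

/-- number of boxes `|μ|` -/
def psize (μ : ℕ → ℕ) : ℕ := Nat.card {p : ℕ × ℕ // p.2 < μ p.1}

/-- number of nonzero parts `ℓ(μ)` -/
def plen (μ : ℕ → ℕ) : ℕ := Nat.card {i : ℕ // 0 < μ i}

/-- conjugate partition (0-indexed) -/
def conjP (μ : ℕ → ℕ) : ℕ → ℕ := fun j => Nat.card {i : ℕ // j < μ i}

/-- depth `d(μ)`: the number of `i ≥ 1` (1-indexed) with `μᵢ ≥ i` -/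
def depth (μ : ℕ → ℕ) : ℕ := Nat.card {i : ℕ // i < μ i}

/-- containment of Young diagrams -/
def subP (μ ν : ℕ → ℕ) : Prop := ∀ i, μ i ≤ ν i

/-- `dim(μ,ν)`: number of saturated chains `μ = λ⁰ ⊂ λ¹ ⊂ ⋯ ⊂ λᵏ = ν`,
  `k = |ν| - |μ|`, `|λᵗ| = |μ| + t`. -/
def relDim (μ ν : ℕ → ℕ) : ℕ :=
  Nat.card {c : Fin (psize ν - psize μ + 1) → (ℕ → ℕ) //
    c 0 = μ ∧ c (Fin.last _) = ν ∧ (∀ t, IsPartition (c t)) ∧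
    ∀ t : Fin (psize ν - psize μ),
      subP (c t.castSucc) (c t.succ) ∧ psize (c t.succ) = psize (c t.castSucc) + 1}

/-- `dim ν` : number of standard tableaux of shape `ν` -/
def dimP (ν : ℕ → ℕ) : ℕ := relDim (fun _ => 0) ν

/-- the hook partition `(p|q) = (p+1, 1^q)` -/
def hookP (p q : ℕ) : ℕ → ℕ := fun i => if i = 0 then p + 1 else if i ≤ q then 1 else 0

/-- Frobenius coordinate `pᵢ = μᵢ - i` (0-indexed input `i`) -/
def frobP (μ : ℕ → ℕ) (i : ℕ) : ℕ := μ i - (i + 1)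
/-- Frobenius coordinate `qᵢ = μ'ᵢ - i` (0-indexed input `i`) -/
def frobQ (μ : ℕ → ℕ) (i : ℕ) : ℕ := conjP μ i - (i + 1)

/-- the ring of polynomials in `x₁,…,xₙ, y₁,…,yₙ` over `ℂ` -/
abbrev SSRing (n : ℕ) := MvPolynomial (Fin n ⊕ Fin n) ℂ

/-- the power series `1/∏_{i=1}^{k}(1 - cᵢ t)` (inverse computed via `invOfUnit`) -/
def denomInv (R : Type*) [CommRing R] (c : ℕ → R) (k : ℕ) : PowerSeries R :=
  PowerSeries.invOfUnit (∏ i ∈ Finset.range k, (1 - PowerSeries.C (R := R) (c i) * PowerSeries.X)) 1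

/-- the power series `∏_{i=1}^{n} (1 + yᵢ t)/(1 - xᵢ t)` -/
def hGenSeries (n : ℕ) : PowerSeries (SSRing n) :=
  (∏ i : Fin n, (1 + PowerSeries.C (R := SSRing n) (MvPolynomial.X (Sum.inr i)) * PowerSeries.X)) *
    PowerSeries.invOfUnit
      (∏ i : Fin n, (1 - PowerSeries.C (R := SSRing n) (MvPolynomial.X (Sum.inl i)) * PowerSeries.X)) 1

/-- `h` is the family of multiparameter complete homogeneous supersymmetric polynomials:
`h a k = h_{k;a}(x₁,…,xₙ;y₁,…,yₙ)`, characterized by `h_{k;a} = 0` for `k < 0`, `h_{0;a} = 1`, and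
`∏_{i=1}^n (1+yᵢt)/(1-xᵢt) = ∑_{k≥0} h_{k;a} tᵏ/∏_{i=1}^k (1-aᵢt)` (an identity of formal
power series in `t`, stated coefficientwise). -/
def IsH (n : ℕ) (h : (ℤ → ℂ) → ℤ → SSRing n) : Prop :=
  (∀ (a : ℤ → ℂ) (k : ℤ), k < 0 → h a k = 0) ∧ (∀ a, h a 0 = 1) ∧
  ∀ a : ℤ → ℂ, hGenSeries n = PowerSeries.mk (fun N =>
    ∑ k ∈ Finset.range (N + 1),
      h a k * PowerSeries.coeff (R := _) (N - k)
        (denomInv (SSRing n) (fun i => MvPolynomial.C (a ((i : ℤ) + 1))) k))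

/-- shift of a parameter sequence: `(τʳ a)ᵢ = a_{i+r}` -/
def tauSeq (a : ℤ → ℂ) (r : ℤ) : ℤ → ℂ := fun i => a (i + r)

/-- dual sequence `âᵢ = -a_{-i+1}` -/
def adual (a : ℤ → ℂ) : ℤ → ℂ := fun i => -a (1 - i)

/-- the multiparameter Schur polynomial `s_{μ;a} = det[h_{μᵢ-i+j; τ^{1-j}a}]_{1≤i,j≤ℓ(μ)}` -/
def schurDet {n : ℕ} (h : (ℤ → ℂ) → ℤ → SSRing n) (a : ℤ → ℂ) (μ : ℕ → ℕ) : SSRing n :=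
  Matrix.det (Matrix.of fun i j : Fin (plen μ) =>
    h (tauSeq a (-(j : ℕ) : ℤ)) ((μ (i : ℕ) : ℤ) - (i : ℕ) + (j : ℕ)))

/-- the Frobenius-Schur sequence `aᵢ = i - 1/2` -/
def aFS : ℤ → ℂ := fun i => (i : ℂ) - 1/2


def gX (c : ℤ) : RatFunc ℂ := RatFunc.X - (c : RatFunc ℂ)

lemma gX_ne_zero (c : ℤ) : gX c ≠ 0 := by
  unfold gX
  have : ((c : RatFunc ℂ)) = algebraMap (Polynomial ℂ) (RatFunc ℂ) (Polynomial.C (c : ℂ)) := by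
    simp
  rw [this, ← RatFunc.algebraMap_X (K := ℂ), ← map_sub]
  simp only [ne_eq]
  exact RatFunc.algebraMap_ne_zero (Polynomial.X_sub_C_ne_zero _)

lemma gX_sub_one (c : ℤ) : gX (c - 1) = gX c + 1 := by unfold gX; push_cast; ring

lemma telescope_up (s : ℤ) (n : ℕ) :
    ∏ j ∈ range n, (gX (s + j - 1) / gX (s + j)) = gX (s - 1) / gX (s + n - 1) := by
  induction n with
  | zero => simp [div_self (gX_ne_zero _)]
  | succ n ih =>
      rw [Finset.prod_range_succ, ih]
      have h1 := gX_ne_zero (s + n - 1)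
      have h2 := gX_ne_zero (s + n)
      push_cast
      rw [show s + ((n : ℤ) + 1) - 1 = s + n from by ring]
      field_simp

lemma telescope_down (s : ℤ) (n : ℕ) :
    ∏ j ∈ range n, (gX (s - j - 1) / gX (s - j)) = gX (s - n) / gX s := by
  induction n with
  | zero => simp [div_self (gX_ne_zero _)]
  | succ n ih =>
      rw [Finset.prod_range_succ, ih]
      have h1 := gX_ne_zero (s - n)
      have h2 := gX_ne_zero s
      push_cast
      rw [show s - ((n:ℤ) + 1) = s - n - 1 from by ring]
      field_simp

lemma lower_card (P : ℕ → Prop) (hmono : ∀ i j, i ≤ j → P j → P i)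
    (hbd : ∃ N, ∀ i, N ≤ i → ¬ P i) (i : ℕ) : i < Nat.card {i // P i} ↔ P i := by
  obtain ⟨N, hN⟩ := hbd
  have hfin : {i | P i}.Finite := by
    apply (Set.finite_Iio N).subset
    intro j hj
    by_contra h
    exact hN j (by simpa using h) hj
  have hcard : Nat.card {i // P i} = ({i | P i}).ncard := rfl
  constructor
  · intro hi
    by_contra h
    have hsub : {i | P i} ⊆ Set.Iio i := by
      intro j hj
      by_contra hji
      exact h (hmono i j (by simpa using hji) hj)
    have h1 := Set.ncard_le_ncard hsub (Set.finite_Iio i)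
    have h2 : (Set.Iio i).ncard = i := by rw [Set.ncard_eq_toFinset_card']; simp
    omega
  · intro hp
    have hsub : Set.Iic i ⊆ {i | P i} := fun j hj => hmono j i hj hp
    have h1 := Set.ncard_le_ncard hsub hfin
    have h2 : (Set.Iic i).ncard = i + 1 := by rw [Set.ncard_eq_toFinset_card']; simp
    omega

lemma nat_eq_of_lt_iff {n m : ℕ} (h : ∀ i, i < n ↔ i < m) : n = m := by
  have h1 := h n; have h2 := h m; omega

lemma conjP_iff {μ : ℕ → ℕ} (h : IsPartition μ) (j i : ℕ) : i < conjP μ j ↔ j < μ i := by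
  obtain ⟨hmono, N, hN⟩ := h
  exact lower_card _ (fun a b hab hb => lt_of_lt_of_le hb (hmono hab))
    ⟨N, fun a ha => by rw [hN a ha]; omega⟩ i

lemma plen_iff {μ : ℕ → ℕ} (h : IsPartition μ) (i : ℕ) : i < plen μ ↔ 0 < μ i :=
  conjP_iff h 0 i

lemma depth_iff {μ : ℕ → ℕ} (h : IsPartition μ) (i : ℕ) : i < depth μ ↔ i < μ i := by
  obtain ⟨hmono, N, hN⟩ := h
  exact lower_card _ (fun a b hab hb => lt_of_le_of_lt hab (lt_of_lt_of_le hb (hmono hab)))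
    ⟨N, fun a ha => by rw [hN a ha]; omega⟩ i

def fX (c : ℤ) : RatFunc ℂ := (RatFunc.X - (c : RatFunc ℂ) + 1) / (RatFunc.X - (c : RatFunc ℂ))

lemma gX_def (c : ℤ) : gX c = RatFunc.X - (c : RatFunc ℂ) := rfl

lemma fX_eq (c : ℤ) : fX c = gX (c - 1) / gX c := by
  rw [gX_sub_one, gX_def]; rfl

lemma row_eq (i n : ℕ) :
    (∏ j ∈ range n, fX ((j : ℤ) - (i : ℤ))) = gX (-(i:ℤ) - 1) / gX ((n:ℤ) - i - 1) := by
  have h := telescope_up (-(i:ℤ)) n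
  rw [show -(i:ℤ) + (n:ℤ) - 1 = (n:ℤ) - i - 1 from by ring] at h
  rw [← h]
  apply Finset.prod_congr rfl; intro j _
  rw [fX_eq, show (-(i:ℤ) + j - 1) = ((j:ℤ) - i) - 1 from by ring,
      show (-(i:ℤ) + j) = (j:ℤ) - i from by ring]

lemma key (d : ℕ) : ∀ (lam : ℕ → ℕ), IsPartition lam → depth lam = d → ∀ l, plen lam ≤ l →
    (∏ i ∈ range l, ∏ j ∈ range (lam i), fX ((j : ℤ) - (i : ℤ)))
      = ∏ i ∈ Finset.range (depth lam),
          (RatFunc.X + (conjP lam i : RatFunc ℂ) - (i : RatFunc ℂ)) /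
            (RatFunc.X - (lam i : RatFunc ℂ) + (i : RatFunc ℂ) + 1) := by
  induction d with
  | zero =>
      intro lam hlam hd l hl
      have h0 : lam 0 = 0 := by have := depth_iff hlam 0; omega
      have hall : ∀ i, lam i = 0 := fun i => Nat.le_antisymm (h0 ▸ hlam.1 (Nat.zero_le i)) (Nat.zero_le _)
      simp [hd, hall]
  | succ d ih =>
      intro lam hlam hd l hl
      have hanti := hlam.1
      have hlam0 : 0 < lam 0 := by have := depth_iff hlam 0; omega
      have hplen0 : 0 < plen lam := (plen_iff hlam 0).2 hlam0
      obtain ⟨l', rfl⟩ : ∃ l', l = l' + 1 := ⟨l - 1, by omega⟩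
      set μ : ℕ → ℕ := fun i => lam (i+1) - 1 with hμdef
      have hμrfl : ∀ i, μ i = lam (i+1) - 1 := fun i => rfl
      have hμ : IsPartition μ := by
        constructor
        · intro a b hab
          exact Nat.sub_le_sub_right (hanti (Nat.succ_le_succ hab)) 1
        · obtain ⟨N, hN⟩ := hlam.2
          exact ⟨N, fun i hi => by rw [hμrfl, hN (i+1) (by omega)]⟩
      have hdμ : depth μ = d := by
        apply nat_eq_of_lt_iff
        intro i
        have h1 := depth_iff hμ i
        have h2 := depth_iff hlam (i+1)
        have h3 := hμrfl i
        omega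
      have hplenμ : plen μ ≤ l' := by
        by_contra hcon
        push_neg at hcon
        have h1 := (plen_iff hμ l').1 hcon
        have h3 := hμrfl l'
        have h2 := (plen_iff hlam (l'+1)).2 (by omega)
        omega
      have hconj : ∀ i, conjP μ i = conjP lam (i+1) - 1 := by
        intro i
        apply nat_eq_of_lt_iff
        intro j
        have h1 := conjP_iff hμ i j
        have h2 := conjP_iff hlam (i+1) (j+1)
        have h3 := hμrfl j
        omega
      have hrow : ∀ i : ℕ,
          (∏ j ∈ range (lam (i+1)), fX ((j : ℤ) - ((i+1 : ℕ) : ℤ)))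
            = (if 0 < lam (i+1) then fX (-((i:ℕ):ℤ) - 1) else 1)
                * ∏ j ∈ range (μ i), fX ((j : ℤ) - (i : ℤ)) := by
        intro i
        have h3 := hμrfl i
        rcases Nat.eq_zero_or_pos (lam (i+1)) with h | h
        · rw [h, if_neg (by omega), show μ i = 0 from by omega]; simp
        · obtain ⟨n, hn⟩ : ∃ n, lam (i+1) = n + 1 := ⟨lam (i+1) - 1, by omega⟩
          rw [hn, Finset.prod_range_succ', if_pos (by omega), show μ i = n from by omega, mul_comm]
          congr 1
          · congr 1; push_cast; ring
          · apply Finset.prod_congr rfl; intro j _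
            congr 1; push_cast; ring
      have hcol : (∏ i ∈ range l', (if 0 < lam (i+1) then fX (-((i:ℕ):ℤ) - 1) else 1))
          = gX (-1 - ((plen lam - 1 : ℕ) : ℤ)) / gX (-1) := by
        have hm : plen lam - 1 ≤ l' := by omega
        calc ∏ i ∈ range l', (if 0 < lam (i+1) then fX (-((i:ℕ):ℤ) - 1) else 1)
            = ∏ i ∈ range l', (if i ∈ range (plen lam - 1) then fX (-((i:ℕ):ℤ) - 1) else 1) := by
              apply Finset.prod_congr rfl; intro i _
              have h1 := plen_iff hlam (i+1)
              by_cases h : 0 < lam (i+1)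
              · rw [if_pos h, if_pos (by simp only [Finset.mem_range]; omega)]
              · rw [if_neg h, if_neg (by simp only [Finset.mem_range]; omega)]
          _ = ∏ i ∈ range l' ∩ range (plen lam - 1), fX (-((i:ℕ):ℤ) - 1) :=
              Finset.prod_ite_mem _ _ _
          _ = ∏ i ∈ range (plen lam - 1), fX (-((i:ℕ):ℤ) - 1) := by
              congr 1
              ext x
              simp only [Finset.mem_inter, Finset.mem_range]
              omega
          _ = gX (-1 - ((plen lam - 1 : ℕ) : ℤ)) / gX (-1) := by
              rw [← telescope_down (-1) (plen lam - 1)]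
              apply Finset.prod_congr rfl; intro i _
              rw [fX_eq, show -((i:ℕ):ℤ) - 1 - 1 = -1 - (i:ℤ) - 1 from by ring,
                show -((i:ℕ):ℤ) - 1 = -1 - (i:ℤ) from by ring]
      have hrow0 : (∏ j ∈ range (lam 0), fX ((j : ℤ) - ((0:ℕ) : ℤ)))
          = gX (-1) / gX ((lam 0 : ℤ) - 1) := by
        have h := telescope_up 0 (lam 0)
        rw [show (0:ℤ) - 1 = -1 from by ring,
          show (0:ℤ) + (lam 0 : ℤ) - 1 = (lam 0 : ℤ) - 1 from by ring] at h
        rw [← h]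
        apply Finset.prod_congr rfl; intro j _
        rw [fX_eq, show (0:ℤ) + j - 1 = ((j:ℤ) - ((0:ℕ):ℤ)) - 1 from by push_cast; ring,
          show (0:ℤ) + j = (j:ℤ) - ((0:ℕ):ℤ) from by push_cast; ring]
      have hCshift : (∏ i ∈ range d,
            (RatFunc.X + (conjP μ i : RatFunc ℂ) - (i : RatFunc ℂ)) /
              (RatFunc.X - (μ i : RatFunc ℂ) + (i : RatFunc ℂ) + 1))
          = ∏ i ∈ range d,
            (RatFunc.X + (conjP lam (i+1) : RatFunc ℂ) - ((i+1 : ℕ) : RatFunc ℂ)) /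
              (RatFunc.X - (lam (i+1) : RatFunc ℂ) + ((i+1 : ℕ) : RatFunc ℂ) + 1) := by
        apply Finset.prod_congr rfl; intro i hi
        rw [Finset.mem_range] at hi
        have h1 : i < depth μ := by omega
        have h2 : i < μ i := (depth_iff hμ i).1 h1
        have h3 := hμrfl i
        have h4 : i + 1 < conjP lam (i+1) := (conjP_iff hlam (i+1) (i+1)).2 (by omega)
        have h5 := hconj i
        rw [show lam (i+1) = μ i + 1 from by omega,
          show conjP lam (i+1) = conjP μ i + 1 from by omega]
        push_cast
        ring
      have hL : (∏ i ∈ range l', ∏ j ∈ range (lam (i+1)), fX ((j : ℤ) - ((i+1 : ℕ) : ℤ)))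
          = (gX (-1 - ((plen lam - 1 : ℕ) : ℤ)) / gX (-1)) * ∏ i ∈ range d,
            (RatFunc.X + (conjP lam (i+1) : RatFunc ℂ) - ((i+1 : ℕ) : RatFunc ℂ)) /
              (RatFunc.X - (lam (i+1) : RatFunc ℂ) + ((i+1 : ℕ) : RatFunc ℂ) + 1) := by
        calc (∏ i ∈ range l', ∏ j ∈ range (lam (i+1)), fX ((j : ℤ) - ((i+1 : ℕ) : ℤ)))
            = ∏ i ∈ range l', ((if 0 < lam (i+1) then fX (-((i:ℕ):ℤ) - 1) else 1)
                * ∏ j ∈ range (μ i), fX ((j : ℤ) - (i : ℤ))) :=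
              Finset.prod_congr rfl (fun i _ => hrow i)
          _ = (∏ i ∈ range l', (if 0 < lam (i+1) then fX (-((i:ℕ):ℤ) - 1) else 1))
                * ∏ i ∈ range l', ∏ j ∈ range (μ i), fX ((j : ℤ) - (i : ℤ)) :=
              Finset.prod_mul_distrib
          _ = _ := by
              rw [hcol, ih μ hμ hdμ l' hplenμ, hdμ, hCshift]
      have hC0 : (gX (-1 - ((plen lam - 1 : ℕ) : ℤ)) / gX (-1)) * (gX (-1) / gX ((lam 0 : ℤ) - 1))
          = (RatFunc.X + (conjP lam 0 : RatFunc ℂ) - ((0:ℕ) : RatFunc ℂ)) /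
              (RatFunc.X - (lam 0 : RatFunc ℂ) + ((0:ℕ) : RatFunc ℂ) + 1) := by
        have e1 : gX (-1 - ((plen lam - 1 : ℕ) : ℤ))
            = RatFunc.X + (conjP lam 0 : RatFunc ℂ) - ((0:ℕ) : RatFunc ℂ) := by
          have hpc : conjP lam 0 = plen lam := rfl
          rw [gX_def, hpc, show ((plen lam - 1 : ℕ) : ℤ) = (plen lam : ℤ) - 1 from by omega]
          push_cast
          ring
        have e2 : gX ((lam 0 : ℤ) - 1)
            = RatFunc.X - (lam 0 : RatFunc ℂ) + ((0:ℕ) : RatFunc ℂ) + 1 := by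
          rw [gX_def]; push_cast; ring
        rw [← e1, ← e2, div_mul_div_comm, mul_comm (gX (-1 - ((plen lam - 1 : ℕ) : ℤ))) (gX (-1)),
          mul_div_mul_left _ _ (gX_ne_zero (-1))]
      rw [hd, Finset.prod_range_succ' (fun i => ∏ j ∈ range (lam i), fX ((j : ℤ) - (i : ℤ))) l',
        Finset.prod_range_succ'
          (fun i => (RatFunc.X + (conjP lam i : RatFunc ℂ) - (i : RatFunc ℂ)) /
            (RatFunc.X - (lam i : RatFunc ℂ) + (i : RatFunc ℂ) + 1)) d,
        hL, hrow0, ← hC0]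
      ring

/-- For a partition `λ` with `ℓ(λ) ≤ l` and Frobenius coordinates
`(p₁,…,p_d | q₁,…,q_d)`, in the field `ℂ(u)` of rational functions in one variable `u`:
`∏_{i=1}^{l} (u+i)/(u+i-λᵢ) = ∏_{(i,j)∈λ} (u-c(i,j)+1)/(u-c(i,j)) = ∏_{i=1}^{d} (u+qᵢ+1)/(u-pᵢ)`,
where `c(i,j) = j - i` is the content of the box `(i,j) ∈ λ`. -/
theorem content_hook_product_identity
    (lam : ℕ → ℕ) (hlam : IsPartition lam) (l : ℕ) (hl : plen lam ≤ l) :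
    (∏ i ∈ Finset.range l,
        (RatFunc.X + (i : RatFunc ℂ) + 1) / (RatFunc.X + (i : RatFunc ℂ) + 1 - (lam i : RatFunc ℂ)))
      = (∏ i ∈ Finset.range l, ∏ j ∈ Finset.range (lam i),
          (RatFunc.X - (((j : ℤ) - (i : ℤ) : ℤ) : RatFunc ℂ) + 1) /
            (RatFunc.X - (((j : ℤ) - (i : ℤ) : ℤ) : RatFunc ℂ))) ∧
    (∏ i ∈ Finset.range l, ∏ j ∈ Finset.range (lam i),
        (RatFunc.X - (((j : ℤ) - (i : ℤ) : ℤ) : RatFunc ℂ) + 1) /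
          (RatFunc.X - (((j : ℤ) - (i : ℤ) : ℤ) : RatFunc ℂ)))
      = (∏ i ∈ Finset.range (depth lam),
          (RatFunc.X + (conjP lam i : RatFunc ℂ) - (i : RatFunc ℂ)) /
            (RatFunc.X - (lam i : RatFunc ℂ) + (i : RatFunc ℂ) + 1)) := by
  constructor
  · show (∏ i ∈ Finset.range l,
        (RatFunc.X + (i : RatFunc ℂ) + 1) / (RatFunc.X + (i : RatFunc ℂ) + 1 - (lam i : RatFunc ℂ)))
      = ∏ i ∈ range l, ∏ j ∈ range (lam i), fX ((j : ℤ) - (i : ℤ))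
    apply Finset.prod_congr rfl; intro i _
    rw [row_eq i (lam i), gX_def, gX_def]
    push_cast
    ring
  · show (∏ i ∈ range l, ∏ j ∈ range (lam i), fX ((j : ℤ) - (i : ℤ))) = _
    exact key (depth lam) lam hlam rfl l hl

end
end

section
/- For every k ≥ 1, n ≥ 1 and every sequence a = (aᵢ)_{i∈ℤ}, the following branching rule holds: h_{k;a}(x₁,…,xₙ;y₁,…,yₙ) = h_{k;a}(x₁,…,x_{n−1};y₁,…,y_{n−1}) + (xₙ + yₙ) · Σ_{r=0}^{k−1} h_{r;a}(x₁,…,x_{n−1};y₁,…,y_{n−1}) · ∏_{t=1}^{k−1−r}(xₙ − a_{k−t}). -/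
open Finset

noncomputable section

section AuxBranching

open PowerSeries

section Toolkit
variable {A B : Type*} [CommRing A] [CommRing B]

private lemma invu {u f g : A} (hu : ∃ v, u * v = 1) (h : u * f = u * g) : f = g := by
  obtain ⟨v, hv⟩ := hu
  calc f = (u*v)*f := by rw [hv]; ring
    _ = v * (u*f) := by ring
    _ = v * (u*g) := by rw [h]
    _ = g := by rw [← mul_assoc, mul_comm v u, hv, one_mul]

private lemma muo {f : A⟦X⟧} (h : constantCoeff (R := A) f = 1) : f * invOfUnit f 1 = 1 :=
  PowerSeries.mul_invOfUnit f 1 (by simp [h])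

private lemma inv_uniq {f g : A⟦X⟧} (h : constantCoeff (R := A) f = 1) (hg : f * g = 1) :
    g = invOfUnit f 1 := invu ⟨g, hg⟩ (by rw [hg, muo h])

private lemma invOfUnit_mul_eq {f g : A⟦X⟧} (hf : constantCoeff (R := A) f = 1)
    (hg : constantCoeff (R := A) g = 1) :
    invOfUnit (f * g) 1 = invOfUnit f 1 * invOfUnit g 1 := by
  refine (inv_uniq (by simp [hf, hg]) ?_).symm
  calc f * g * (invOfUnit f 1 * invOfUnit g 1)
      = (f * invOfUnit f 1) * (g * invOfUnit g 1) := by ring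
    _ = 1 := by rw [muo hf, muo hg, one_mul]

private lemma map_invOfUnit (ρ : A →+* B) {f : A⟦X⟧} (hf : constantCoeff (R := A) f = 1) :
    PowerSeries.map ρ (invOfUnit f 1) = invOfUnit (PowerSeries.map ρ f) 1 := by
  refine inv_uniq ?_ ?_
  · have : constantCoeff (R := B) (PowerSeries.map ρ f) = ρ (constantCoeff (R := A) f) := by
      rw [← coeff_zero_eq_constantCoeff_apply, ← coeff_zero_eq_constantCoeff_apply, coeff_map]
    rw [this, hf, map_one]
  · rw [← map_mul, muo hf, map_one]

private lemma ccP {ι : Type*} (s : Finset ι) (c : ι → A) :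
    constantCoeff (R := A) (∏ i ∈ s, (1 - PowerSeries.C (R := A) (c i) * PowerSeries.X)) = 1 := by
  rw [map_prod]; simp

/-- mod `X^(N+1)` relation -/
private def ModX (N : ℕ) (f g : A⟦X⟧) : Prop := (PowerSeries.X : A⟦X⟧)^(N+1) ∣ (f - g)

private lemma ModX.refl {N : ℕ} (f : A⟦X⟧) : ModX N f f := by simp [ModX]

private lemma ModX.trans {N : ℕ} {f g h : A⟦X⟧} (h1 : ModX N f g) (h2 : ModX N g h) :
    ModX N f h := by
  have := dvd_add h1 h2; simpa [ModX] using this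

private lemma ModX.mul_right {N : ℕ} {f g : A⟦X⟧} (u : A⟦X⟧) (h1 : ModX N f g) :
    ModX N (f * u) (g * u) := by
  obtain ⟨q, hq⟩ := h1
  exact ⟨q * u, by rw [← sub_mul, hq]; ring⟩

private lemma ModX.mul_left {N : ℕ} {f g : A⟦X⟧} (u : A⟦X⟧) (h1 : ModX N f g) :
    ModX N (u * f) (u * g) := by
  rw [mul_comm u f, mul_comm u g]; exact h1.mul_right u

private lemma ModX.add {N : ℕ} {f g f' g' : A⟦X⟧} (h1 : ModX N f g) (h2 : ModX N f' g') :
    ModX N (f + f') (g + g') := by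
  have := dvd_add h1 h2; simpa [ModX, sub_add_sub_comm] using this

private lemma ModX.sum {N : ℕ} {ι : Type*} (s : Finset ι) (f g : ι → A⟦X⟧)
    (h : ∀ i ∈ s, ModX N (f i) (g i)) : ModX N (∑ i ∈ s, f i) (∑ i ∈ s, g i) := by
  simpa [ModX, ← Finset.sum_sub_distrib] using Finset.dvd_sum h

private lemma ModX.coeff_eq {N : ℕ} {f g : A⟦X⟧} (h : ModX N f g) {i : ℕ} (hi : i ≤ N) :
    coeff (R := A) i f = coeff (R := A) i g := by
  have := PowerSeries.X_pow_dvd_iff.1 h i (by omega)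
  rw [map_sub, sub_eq_zero] at this; exact this

private lemma ModX.of_coeff {N : ℕ} {f g : A⟦X⟧} (h : ∀ i ≤ N, coeff (R := A) i f = coeff (R := A) i g) :
    ModX N f g := by
  refine PowerSeries.X_pow_dvd_iff.2 fun i hi => ?_
  rw [map_sub, sub_eq_zero]; exact h i (by omega)

private lemma ModX.hi_pow {N k : ℕ} (hk : N + 1 ≤ k) (q : A⟦X⟧) :
    ModX N ((PowerSeries.X : A⟦X⟧)^k * q) 0 := by
  refine ⟨(PowerSeries.X : A⟦X⟧)^(k - (N+1)) * q, ?_⟩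
  rw [sub_zero, ← mul_assoc, ← pow_add]
  congr 2; omega

end Toolkit

section Tele
variable {A : Type*} [CommRing A] (x : A) (c : ℕ → A)

private def DD (k : ℕ) : A⟦X⟧ :=
  ∏ i ∈ Finset.range k, (1 - PowerSeries.C (R := A) (c i) * PowerSeries.X)
private def EE : A⟦X⟧ := 1 - PowerSeries.C (R := A) x * PowerSeries.X

private lemma constCoeff_DD (k : ℕ) : constantCoeff (R := A) (DD c k) = 1 := ccP _ _
private lemma constCoeff_EE : constantCoeff (R := A) (EE x) = 1 := by simp [EE]

private lemma DD_mul (k : ℕ) : DD c k * invOfUnit (DD c k) 1 = 1 := muo (constCoeff_DD c k)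
private lemma EE_mul : EE x * invOfUnit (EE x) 1 = 1 := muo (constCoeff_EE x)

private lemma tele_step (r : ℕ) :
    invOfUnit (EE x) 1 * invOfUnit (DD c r) 1 =
      invOfUnit (DD c (r+1)) 1 +
        (PowerSeries.C (R := A) x - PowerSeries.C (R := A) (c r)) * PowerSeries.X *
          (invOfUnit (EE x) 1 * invOfUnit (DD c (r+1)) 1) := by
  apply invu (u := EE x * DD c (r+1))
  · exact ⟨invOfUnit (EE x) 1 * invOfUnit (DD c (r+1)) 1, by
      calc EE x * DD c (r+1) * (invOfUnit (EE x) 1 * invOfUnit (DD c (r+1)) 1)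
          = (EE x * invOfUnit (EE x) 1) * (DD c (r+1) * invOfUnit (DD c (r+1)) 1) := by ring
        _ = 1 := by rw [EE_mul, DD_mul, one_mul]⟩
  · have hD1 : DD c (r+1) = DD c r * (1 - PowerSeries.C (R := A) (c r) * PowerSeries.X) := by
      rw [DD, Finset.prod_range_succ]; rfl
    calc EE x * DD c (r+1) * (invOfUnit (EE x) 1 * invOfUnit (DD c r) 1)
        = (EE x * invOfUnit (EE x) 1) * ((1 - PowerSeries.C (R := A) (c r) * PowerSeries.X) *
            (DD c r * invOfUnit (DD c r) 1)) := by rw [hD1]; ring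
      _ = 1 - PowerSeries.C (R := A) (c r) * PowerSeries.X := by rw [EE_mul, DD_mul]; ring
      _ = EE x * DD c (r+1) * (invOfUnit (DD c (r+1)) 1 +
            (PowerSeries.C (R := A) x - PowerSeries.C (R := A) (c r)) * PowerSeries.X *
              (invOfUnit (EE x) 1 * invOfUnit (DD c (r+1)) 1)) := by
          rw [mul_add]
          have h1 : EE x * DD c (r+1) * invOfUnit (DD c (r+1)) 1 = EE x := by
            rw [mul_assoc, DD_mul, mul_one]
          have h2 : EE x * DD c (r+1) *
              ((PowerSeries.C (R := A) x - PowerSeries.C (R := A) (c r)) * PowerSeries.X *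
                (invOfUnit (EE x) 1 * invOfUnit (DD c (r+1)) 1)) =
              (PowerSeries.C (R := A) x - PowerSeries.C (R := A) (c r)) * PowerSeries.X := by
            calc _ = (EE x * invOfUnit (EE x) 1) * (DD c (r+1) * invOfUnit (DD c (r+1)) 1) *
                ((PowerSeries.C (R := A) x - PowerSeries.C (R := A) (c r)) * PowerSeries.X) := by ring
              _ = _ := by rw [EE_mul, DD_mul]; ring
          rw [h1, h2, EE]; ring

private lemma tele_expand (r S : ℕ) :
    invOfUnit (EE x) 1 * invOfUnit (DD c r) 1 =
      (∑ s ∈ Finset.range S,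
        (∏ j ∈ Finset.range s, (PowerSeries.C (R := A) x - PowerSeries.C (R := A) (c (r+j)))) *
          PowerSeries.X ^ s * invOfUnit (DD c (r+s+1)) 1) +
      (∏ j ∈ Finset.range S, (PowerSeries.C (R := A) x - PowerSeries.C (R := A) (c (r+j)))) *
        PowerSeries.X ^ S * (invOfUnit (EE x) 1 * invOfUnit (DD c (r+S)) 1) := by
  induction S with
  | zero => simp
  | succ S ih =>
    rw [ih, tele_step x c (r+S), Finset.sum_range_succ, Finset.prod_range_succ]
    ring_nf
    ring

end Tele

private lemma coeff_denomInv_zero {A : Type*} [CommRing A] (c : ℕ → A) (k : ℕ) :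
    coeff (R := A) 0 (denomInv A c k) = 1 := by
  rw [coeff_zero_eq_constantCoeff_apply, denomInv, constantCoeff_invOfUnit]
  simp

private lemma coeffT {A : Type*} [CommRing A] {N : ℕ} (b : ℕ → A) (F : ℕ → A⟦X⟧) {i : ℕ}
    (hi : i ≤ N) :
    coeff (R := A) i (∑ k ∈ Finset.range (N+1), PowerSeries.C (R := A) (b k) * PowerSeries.X ^ k * F k) =
      ∑ k ∈ Finset.range (i+1), b k * coeff (R := A) (i - k) (F k) := by
  rw [map_sum]
  have key : ∀ k, coeff (R := A) i (PowerSeries.C (R := A) (b k) * PowerSeries.X ^ k * F k) =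
      if k ≤ i then b k * coeff (R := A) (i - k) (F k) else 0 := by
    intro k
    rw [mul_assoc, PowerSeries.coeff_C_mul, PowerSeries.coeff_X_pow_mul']
    split <;> simp
  simp only [key]
  rw [← Finset.sum_subset (Finset.range_subset_range.2 (by omega : i+1 ≤ N+1))
    (fun k _ hk => by rw [if_neg (by simp at hk ⊢; omega)])]
  exact Finset.sum_congr rfl fun k hk => by
    rw [if_pos (by simp at hk; omega)]

private lemma IsH_unique {n : ℕ} {h1 h2 : (ℤ → ℂ) → ℤ → SSRing n}
    (H1 : IsH n h1) (H2 : IsH n h2) (a : ℤ → ℂ) (k : ℤ) : h1 a k = h2 a k := by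
  rcases lt_or_ge k 0 with hk | hk
  · rw [H1.1 a k hk, H2.1 a k hk]
  · obtain ⟨N, rfl⟩ := Int.eq_ofNat_of_zero_le hk
    induction N using Nat.strong_induction_on with
    | _ N ih =>
      have e1 := H1.2.2 a
      have e2 := H2.2.2 a
      have := congrArg (coeff (R := SSRing n) N) (e1.symm.trans e2)
      simp only [PowerSeries.coeff_mk] at this
      rw [Finset.sum_range_succ, Finset.sum_range_succ] at this
      have hd : coeff (R := SSRing n) (N - N) (denomInv (SSRing n)
          (fun i => MvPolynomial.C (a ((i : ℤ) + 1))) N) = 1 := by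
        rw [Nat.sub_self, coeff_denomInv_zero]
      rw [hd, mul_one, mul_one] at this
      have hsum : ∀ kk ∈ Finset.range N, h1 a kk * coeff (R := SSRing n) (N - kk)
            (denomInv (SSRing n) (fun i => MvPolynomial.C (a ((i : ℤ) + 1))) kk) =
          h2 a kk * coeff (R := SSRing n) (N - kk)
            (denomInv (SSRing n) (fun i => MvPolynomial.C (a ((i : ℤ) + 1))) kk) := by
        intro kk hkk
        rw [ih kk (Finset.mem_range.1 hkk) (by positivity)]
      rw [Finset.sum_congr rfl hsum] at this
      exact add_left_cancel this

private def ρh (m : ℕ) : SSRing m →+* SSRing (m + 1) :=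
  (MvPolynomial.rename (Sum.map Fin.castSucc Fin.castSucc)).toRingHom

private lemma map_denomInv (m : ℕ) (a : ℤ → ℂ) (k : ℕ) :
    PowerSeries.map (ρh m) (denomInv (SSRing m) (fun i => MvPolynomial.C (a ((i : ℤ) + 1))) k) =
      denomInv (SSRing (m+1)) (fun i => MvPolynomial.C (a ((i : ℤ) + 1))) k := by
  rw [denomInv, denomInv, map_invOfUnit _ (ccP _ _)]
  have : PowerSeries.map (ρh m) (∏ i ∈ Finset.range k,
      (1 - PowerSeries.C (R := SSRing m) (MvPolynomial.C (a ((i:ℤ) + 1))) * PowerSeries.X)) =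
      ∏ i ∈ Finset.range k,
      (1 - PowerSeries.C (R := SSRing (m+1)) (MvPolynomial.C (a ((i:ℤ) + 1))) * PowerSeries.X) := by
    simp only [map_prod, map_sub, map_one, map_mul, PowerSeries.map_C, PowerSeries.map_X]
    refine Finset.prod_congr rfl fun i _ => ?_
    simp [ρh, MvPolynomial.rename_C]
  rw [this]

private lemma hGen_split (m : ℕ) :
    hGenSeries (m+1) = PowerSeries.map (ρh m) (hGenSeries m) *
      ((1 + PowerSeries.C (R := SSRing (m+1)) (MvPolynomial.X (Sum.inr (Fin.last m))) * PowerSeries.X) *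
        invOfUnit (1 - PowerSeries.C (R := SSRing (m+1)) (MvPolynomial.X (Sum.inl (Fin.last m))) *
          PowerSeries.X) 1) := by
  rw [hGenSeries, hGenSeries, map_mul]
  have hmapy : PowerSeries.map (ρh m)
      (∏ i : Fin m, (1 + PowerSeries.C (R := SSRing m) (MvPolynomial.X (Sum.inr i)) * PowerSeries.X)) =
      ∏ i : Fin m, (1 + PowerSeries.C (R := SSRing (m+1))
        (MvPolynomial.X (Sum.inr i.castSucc)) * PowerSeries.X) := by
    simp only [map_prod, map_add, map_one, map_mul, PowerSeries.map_C, PowerSeries.map_X]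
    refine Finset.prod_congr rfl fun i _ => ?_
    simp [ρh, MvPolynomial.rename_X]
  have hmapx : PowerSeries.map (ρh m)
      (∏ i : Fin m, (1 - PowerSeries.C (R := SSRing m) (MvPolynomial.X (Sum.inl i)) * PowerSeries.X)) =
      ∏ i : Fin m, (1 - PowerSeries.C (R := SSRing (m+1))
        (MvPolynomial.X (Sum.inl i.castSucc)) * PowerSeries.X) := by
    simp only [map_prod, map_sub, map_one, map_mul, PowerSeries.map_C, PowerSeries.map_X]
    refine Finset.prod_congr rfl fun i _ => ?_
    simp [ρh, MvPolynomial.rename_X]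
  rw [map_invOfUnit _ (ccP _ _), hmapy, hmapx]
  rw [Fin.prod_univ_castSucc (f := fun i : Fin (m+1) => (1 + PowerSeries.C (R := SSRing (m+1))
    (MvPolynomial.X (Sum.inr i)) * PowerSeries.X))]
  rw [Fin.prod_univ_castSucc (f := fun i : Fin (m+1) => (1 - PowerSeries.C (R := SSRing (m+1))
    (MvPolynomial.X (Sum.inl i)) * PowerSeries.X))]
  rw [invOfUnit_mul_eq (ccP _ _) (by simp)]
  ring

end AuxBranching

private def Hfam (m : ℕ) (h' : (ℤ → ℂ) → ℤ → SSRing m) : (ℤ → ℂ) → ℤ → SSRing (m + 1) :=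
  fun a' kk =>
    if kk < 0 then 0 else if kk = 0 then 1 else
      (ρh m) (h' a' kk) +
        (MvPolynomial.X (Sum.inl (Fin.last m)) + MvPolynomial.X (Sum.inr (Fin.last m))) *
          ∑ r ∈ Finset.range kk.toNat,
            (ρh m) (h' a' (r : ℤ)) *
              ∏ t ∈ Finset.range (kk.toNat - 1 - r),
                (MvPolynomial.X (Sum.inl (Fin.last m)) - MvPolynomial.C (a' (kk - 1 - (t : ℕ))))

set_option maxHeartbeats 1000000 in
open PowerSeries in
private lemma Hfam_isH (m : ℕ) (h' : (ℤ → ℂ) → ℤ → SSRing m) (hh' : IsH m h') :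
    IsH (m + 1) (Hfam m h') := by
  refine ⟨fun a' kk hkk => by simp [Hfam, if_pos hkk],
    fun a' => by simp [Hfam], fun a' => ?_⟩
  set xP : SSRing (m+1) := MvPolynomial.X (Sum.inl (Fin.last m)) with hxP
  set yP : SSRing (m+1) := MvPolynomial.X (Sum.inr (Fin.last m)) with hyP
  set c : ℕ → SSRing (m+1) := fun i => MvPolynomial.C (a' ((i : ℤ) + 1)) with hc
  have hden : ∀ kk, denomInv (SSRing (m+1)) c kk = invOfUnit (DD c kk) 1 := fun _ => rfl
  have hEE : EE xP = 1 - PowerSeries.C (R := SSRing (m+1)) xP * PowerSeries.X := rfl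
  apply PowerSeries.ext
  intro N
  rw [PowerSeries.coeff_mk]
  simp only [hden]
  -- abbreviations (as plain terms)
  -- Step A : map of the m-variable series is congruent to the truncated sum
  have stepA : ModX N (PowerSeries.map (ρh m) (hGenSeries m))
      (∑ kk ∈ Finset.range (N+1), PowerSeries.C (R := SSRing (m+1)) ((ρh m) (h' a' (kk : ℤ))) *
        PowerSeries.X ^ kk * invOfUnit (DD c kk) 1) := by
    rw [hh'.2.2 a']
    refine ModX.of_coeff fun i hi => ?_
    rw [PowerSeries.coeff_map, PowerSeries.coeff_mk,
      coeffT (fun kk => (ρh m) (h' a' (kk : ℤ))) (fun kk => invOfUnit (DD c kk) 1) hi]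
    rw [map_sum]
    refine Finset.sum_congr rfl fun kk hkk => ?_
    rw [map_mul]
    congr 1
    rw [← PowerSeries.coeff_map, map_denomInv]
    rfl
  -- Step C
  have stepC : (1 + PowerSeries.C (R := SSRing (m+1)) yP * PowerSeries.X) * invOfUnit (EE xP) 1 =
      1 + (PowerSeries.C (R := SSRing (m+1)) xP + PowerSeries.C (R := SSRing (m+1)) yP) * PowerSeries.X *
        invOfUnit (EE xP) 1 := by
    have h1 : (1 + PowerSeries.C (R := SSRing (m+1)) yP * PowerSeries.X) =
        EE xP + (PowerSeries.C (R := SSRing (m+1)) xP + PowerSeries.C (R := SSRing (m+1)) yP) *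
          PowerSeries.X := by rw [hEE]; ring
    rw [h1, add_mul, EE_mul]
  -- Step D
  have stepD : (∑ kk ∈ Finset.range (N+1), PowerSeries.C (R := SSRing (m+1))
        ((ρh m) (h' a' (kk : ℤ))) * PowerSeries.X ^ kk * invOfUnit (DD c kk) 1) *
      (1 + (PowerSeries.C (R := SSRing (m+1)) xP + PowerSeries.C (R := SSRing (m+1)) yP) * PowerSeries.X *
        invOfUnit (EE xP) 1) =
      (∑ kk ∈ Finset.range (N+1), PowerSeries.C (R := SSRing (m+1))
        ((ρh m) (h' a' (kk : ℤ))) * PowerSeries.X ^ kk * invOfUnit (DD c kk) 1) +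
      (PowerSeries.C (R := SSRing (m+1)) xP + PowerSeries.C (R := SSRing (m+1)) yP) *
        ∑ r ∈ Finset.range (N+1), PowerSeries.C (R := SSRing (m+1)) ((ρh m) (h' a' (r : ℤ))) *
          PowerSeries.X ^ (r+1) * (invOfUnit (EE xP) 1 * invOfUnit (DD c r) 1) := by
    rw [mul_add, mul_one]
    congr 1
    rw [Finset.sum_mul, Finset.mul_sum]
    refine Finset.sum_congr rfl fun r _ => ?_
    rw [pow_succ]
    ring
  -- Step E
  have stepE : ∀ r ∈ Finset.range (N+1), ModX N
      (PowerSeries.C (R := SSRing (m+1)) ((ρh m) (h' a' (r : ℤ))) * PowerSeries.X ^ (r+1) *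
        (invOfUnit (EE xP) 1 * invOfUnit (DD c r) 1))
      (∑ s ∈ Finset.range (N - r), PowerSeries.C (R := SSRing (m+1)) ((ρh m) (h' a' (r : ℤ))) *
        (∏ j ∈ Finset.range s, (PowerSeries.C (R := SSRing (m+1)) xP -
          PowerSeries.C (R := SSRing (m+1)) (c (r+j)))) *
        PowerSeries.X ^ (r+1+s) * invOfUnit (DD c (r+s+1)) 1) := by
    intro r hr
    have hr' : r ≤ N := by simp at hr; omega
    rw [tele_expand xP c r (N - r), mul_add]
    have e1 : PowerSeries.C (R := SSRing (m+1)) ((ρh m) (h' a' (r : ℤ))) * PowerSeries.X ^ (r+1) *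
        (∑ s ∈ Finset.range (N - r),
          (∏ j ∈ Finset.range s, (PowerSeries.C (R := SSRing (m+1)) xP -
            PowerSeries.C (R := SSRing (m+1)) (c (r+j)))) *
          PowerSeries.X ^ s * invOfUnit (DD c (r+s+1)) 1) =
        ∑ s ∈ Finset.range (N - r), PowerSeries.C (R := SSRing (m+1)) ((ρh m) (h' a' (r : ℤ))) *
          (∏ j ∈ Finset.range s, (PowerSeries.C (R := SSRing (m+1)) xP -
            PowerSeries.C (R := SSRing (m+1)) (c (r+j)))) *
          PowerSeries.X ^ (r+1+s) * invOfUnit (DD c (r+s+1)) 1 := by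
      rw [Finset.mul_sum]
      refine Finset.sum_congr rfl fun s _ => ?_
      rw [pow_add]
      ring
    rw [e1]
    have e2 : ModX N (PowerSeries.C (R := SSRing (m+1)) ((ρh m) (h' a' (r : ℤ))) *
        PowerSeries.X ^ (r+1) *
        ((∏ j ∈ Finset.range (N - r), (PowerSeries.C (R := SSRing (m+1)) xP -
          PowerSeries.C (R := SSRing (m+1)) (c (r+j)))) *
          PowerSeries.X ^ (N - r) * (invOfUnit (EE xP) 1 * invOfUnit (DD c (r+(N-r))) 1))) 0 := by
      have e3 : PowerSeries.C (R := SSRing (m+1)) ((ρh m) (h' a' (r : ℤ))) *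
          PowerSeries.X ^ (r+1) *
          ((∏ j ∈ Finset.range (N - r), (PowerSeries.C (R := SSRing (m+1)) xP -
            PowerSeries.C (R := SSRing (m+1)) (c (r+j)))) *
            PowerSeries.X ^ (N - r) * (invOfUnit (EE xP) 1 * invOfUnit (DD c (r+(N-r))) 1)) =
          PowerSeries.X ^ (N+1) * (PowerSeries.C (R := SSRing (m+1)) ((ρh m) (h' a' (r : ℤ))) *
            (∏ j ∈ Finset.range (N - r), (PowerSeries.C (R := SSRing (m+1)) xP -
              PowerSeries.C (R := SSRing (m+1)) (c (r+j)))) *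
            (invOfUnit (EE xP) 1 * invOfUnit (DD c (r+(N-r))) 1)) := by
        rw [show N+1 = (r+1)+(N-r) by omega, pow_add]
        ring
      rw [e3]
      exact ModX.hi_pow (le_refl _) _
    have := ModX.add (ModX.refl (∑ s ∈ Finset.range (N - r),
        PowerSeries.C (R := SSRing (m+1)) ((ρh m) (h' a' (r : ℤ))) *
        (∏ j ∈ Finset.range s, (PowerSeries.C (R := SSRing (m+1)) xP -
          PowerSeries.C (R := SSRing (m+1)) (c (r+j)))) *
        PowerSeries.X ^ (r+1+s) * invOfUnit (DD c (r+s+1)) 1)) e2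
    simpa using this
  -- swap the double sum
  have swap : (∑ r ∈ Finset.range (N+1), ∑ s ∈ Finset.range (N - r),
        PowerSeries.C (R := SSRing (m+1)) ((ρh m) (h' a' (r : ℤ))) *
        (∏ j ∈ Finset.range s, (PowerSeries.C (R := SSRing (m+1)) xP -
          PowerSeries.C (R := SSRing (m+1)) (c (r+j)))) *
        PowerSeries.X ^ (r+1+s) * invOfUnit (DD c (r+s+1)) 1) =
      ∑ kk ∈ Finset.range (N+1), ∑ r ∈ Finset.range kk,
        PowerSeries.C (R := SSRing (m+1)) ((ρh m) (h' a' (r : ℤ))) *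
        (∏ j ∈ Finset.range (kk-1-r), (PowerSeries.C (R := SSRing (m+1)) xP -
          PowerSeries.C (R := SSRing (m+1)) (c (r+j)))) *
        PowerSeries.X ^ kk * invOfUnit (DD c kk) 1 := by
    have inner : ∀ r ∈ Finset.range (N+1), (∑ s ∈ Finset.range (N - r),
        PowerSeries.C (R := SSRing (m+1)) ((ρh m) (h' a' (r : ℤ))) *
        (∏ j ∈ Finset.range s, (PowerSeries.C (R := SSRing (m+1)) xP -
          PowerSeries.C (R := SSRing (m+1)) (c (r+j)))) *
        PowerSeries.X ^ (r+1+s) * invOfUnit (DD c (r+s+1)) 1) =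
        ∑ kk ∈ Finset.Ico (r+1) (N+1),
          PowerSeries.C (R := SSRing (m+1)) ((ρh m) (h' a' (r : ℤ))) *
          (∏ j ∈ Finset.range (kk-1-r), (PowerSeries.C (R := SSRing (m+1)) xP -
            PowerSeries.C (R := SSRing (m+1)) (c (r+j)))) *
          PowerSeries.X ^ kk * invOfUnit (DD c kk) 1 := by
      intro r hr
      rw [Finset.sum_Ico_eq_sum_range, show (N+1) - (r+1) = N - r by omega]
      refine Finset.sum_congr rfl fun s hs => ?_
      rw [show r+1+s-1-r = s by omega, show r+1+s = r+s+1 by omega]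
    calc _ = ∑ r ∈ Finset.range (N+1), ∑ kk ∈ Finset.Ico (r+1) (N+1),
          PowerSeries.C (R := SSRing (m+1)) ((ρh m) (h' a' (r : ℤ))) *
          (∏ j ∈ Finset.range (kk-1-r), (PowerSeries.C (R := SSRing (m+1)) xP -
            PowerSeries.C (R := SSRing (m+1)) (c (r+j)))) *
          PowerSeries.X ^ kk * invOfUnit (DD c kk) 1 := Finset.sum_congr rfl inner
      _ = _ := by
          simp only [Finset.range_eq_Ico]
          exact Finset.sum_Ico_Ico_comm' 0 (N+1) _
  -- step G : identify with the candidate coefficients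
  have stepG : (∑ kk ∈ Finset.range (N+1), PowerSeries.C (R := SSRing (m+1))
        ((ρh m) (h' a' (kk : ℤ))) * PowerSeries.X ^ kk * invOfUnit (DD c kk) 1) +
      (PowerSeries.C (R := SSRing (m+1)) xP + PowerSeries.C (R := SSRing (m+1)) yP) *
        ∑ kk ∈ Finset.range (N+1), ∑ r ∈ Finset.range kk,
          PowerSeries.C (R := SSRing (m+1)) ((ρh m) (h' a' (r : ℤ))) *
          (∏ j ∈ Finset.range (kk-1-r), (PowerSeries.C (R := SSRing (m+1)) xP -
            PowerSeries.C (R := SSRing (m+1)) (c (r+j)))) *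
          PowerSeries.X ^ kk * invOfUnit (DD c kk) 1 =
      ∑ kk ∈ Finset.range (N+1), PowerSeries.C (R := SSRing (m+1)) (Hfam m h' a' (kk : ℤ)) *
        PowerSeries.X ^ kk * invOfUnit (DD c kk) 1 := by
    rw [Finset.mul_sum, ← Finset.sum_add_distrib]
    refine Finset.sum_congr rfl fun kk hkk => ?_
    rcases Nat.eq_zero_or_pos kk with h0 | hpos
    · subst h0
      have hH0 : Hfam m h' a' ((0:ℕ) : ℤ) = 1 := by simp [Hfam]
      have hb0 : (ρh m) (h' a' ((0:ℕ) : ℤ)) = 1 := by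
        rw [Nat.cast_zero, hh'.2.1 a', map_one]
      rw [hH0, hb0]
      simp
    · have hH : Hfam m h' a' (kk : ℤ) = (ρh m) (h' a' (kk : ℤ)) + (xP + yP) *
          ∑ r ∈ Finset.range kk, (ρh m) (h' a' (r : ℤ)) *
            ∏ t ∈ Finset.range (kk - 1 - r),
              (xP - MvPolynomial.C (a' ((kk : ℤ) - 1 - (t : ℕ)))) := by
        simp only [Hfam]
        rw [if_neg (by omega), if_neg (by omega), Int.toNat_natCast]
      have hprod : ∀ r ∈ Finset.range kk,
          PowerSeries.C (R := SSRing (m+1)) (∏ t ∈ Finset.range (kk-1-r),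
            (xP - MvPolynomial.C (a' ((kk : ℤ) - 1 - (t : ℕ))))) =
          ∏ j ∈ Finset.range (kk-1-r), (PowerSeries.C (R := SSRing (m+1)) xP -
            PowerSeries.C (R := SSRing (m+1)) (c (r+j))) := by
        intro r hr
        have hrk : r < kk := Finset.mem_range.1 hr
        rw [← Finset.prod_range_reflect (fun j => PowerSeries.C (R := SSRing (m+1)) xP -
          PowerSeries.C (R := SSRing (m+1)) (c (r+j))) (kk-1-r)]
        rw [map_prod]
        refine Finset.prod_congr rfl fun t ht => ?_
        have ht' : t < kk - 1 - r := Finset.mem_range.1 ht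
        rw [map_sub]
        rw [hc]
        have harg : (kk : ℤ) - 1 - (t : ℕ) = ((r + (kk - 1 - r - 1 - t) : ℕ) : ℤ) + 1 := by
          omega
        rw [harg]
      have e5 : PowerSeries.C (R := SSRing (m+1)) (∑ r ∈ Finset.range kk,
            (ρh m) (h' a' (r : ℤ)) * ∏ t ∈ Finset.range (kk - 1 - r),
              (xP - MvPolynomial.C (a' ((kk : ℤ) - 1 - (t : ℕ))))) =
          ∑ r ∈ Finset.range kk, PowerSeries.C (R := SSRing (m+1)) ((ρh m) (h' a' (r : ℤ))) *
            ∏ j ∈ Finset.range (kk-1-r), (PowerSeries.C (R := SSRing (m+1)) xP -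
              PowerSeries.C (R := SSRing (m+1)) (c (r+j))) := by
        rw [map_sum]
        exact Finset.sum_congr rfl fun r hr => by rw [map_mul, hprod r hr]
      rw [hH, map_add, map_mul, map_add, e5]
      have e4 : (∑ r ∈ Finset.range kk, PowerSeries.C (R := SSRing (m+1))
            ((ρh m) (h' a' (r : ℤ))) *
            ∏ j ∈ Finset.range (kk-1-r), (PowerSeries.C (R := SSRing (m+1)) xP -
              PowerSeries.C (R := SSRing (m+1)) (c (r+j)))) *
          (PowerSeries.X ^ kk * invOfUnit (DD c kk) 1) =
          ∑ r ∈ Finset.range kk,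
            PowerSeries.C (R := SSRing (m+1)) ((ρh m) (h' a' (r : ℤ))) *
            (∏ j ∈ Finset.range (kk-1-r), (PowerSeries.C (R := SSRing (m+1)) xP -
              PowerSeries.C (R := SSRing (m+1)) (c (r+j)))) *
            PowerSeries.X ^ kk * invOfUnit (DD c kk) 1 := by
        rw [Finset.sum_mul]
        exact Finset.sum_congr rfl fun r _ => by ring
      rw [← e4]
      ring
  -- final assembly
  have main : ModX N (hGenSeries (m+1))
      (∑ kk ∈ Finset.range (N+1), PowerSeries.C (R := SSRing (m+1)) (Hfam m h' a' (kk : ℤ)) *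
        PowerSeries.X ^ kk * invOfUnit (DD c kk) 1) := by
    rw [hGen_split m, ← hEE]
    refine ModX.trans (stepA.mul_right _) ?_
    rw [stepC, stepD]
    refine ModX.trans (ModX.add (ModX.refl _)
      (ModX.mul_left _ (ModX.sum _ _ _ stepE))) ?_
    rw [swap, stepG]
    exact ModX.refl _
  rw [main.coeff_eq (le_refl N)]
  exact coeffT _ _ (le_refl N)

/-- **branching rule.** For every `k ≥ 1`, `n = m + 1 ≥ 1` and every sequence `a`:
`h_{k;a}(x₁,…,xₙ;y₁,…,yₙ) = h_{k;a}(x₁,…,x_{n-1};y₁,…,y_{n-1})`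
`+ (xₙ+yₙ)·∑_{r=0}^{k-1} h_{r;a}(x₁,…,x_{n-1};y₁,…,y_{n-1})·∏_{t=1}^{k-1-r}(xₙ - a_{k-t})`,
where the `(n-1)`-variable polynomials are viewed in the `n`-variable ring via the
inclusion of the first `n-1` variables. -/
theorem h_branching_rule
    (m : ℕ) (a : ℤ → ℂ) (k : ℕ) (hk : 1 ≤ k)
    (h : (ℤ → ℂ) → ℤ → SSRing (m + 1)) (hh : IsH (m + 1) h)
    (h' : (ℤ → ℂ) → ℤ → SSRing m) (hh' : IsH m h') :
    h a (k : ℤ) =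
      MvPolynomial.rename (Sum.map Fin.castSucc Fin.castSucc) (h' a (k : ℤ)) +
        (MvPolynomial.X (Sum.inl (Fin.last m)) + MvPolynomial.X (Sum.inr (Fin.last m))) *
          ∑ r ∈ Finset.range k,
            MvPolynomial.rename (Sum.map Fin.castSucc Fin.castSucc) (h' a (r : ℤ)) *
              ∏ t ∈ Finset.range (k - 1 - r),
                (MvPolynomial.X (Sum.inl (Fin.last m)) -
                  MvPolynomial.C (a ((k : ℤ) - 1 - (t : ℕ)))) := by
  have heq := IsH_unique hh (Hfam_isH m h' hh') a (k : ℤ)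
  rw [heq]
  simp only [Hfam]
  rw [if_neg (by omega), if_neg (by omega), Int.toNat_natCast]
  rfl

end
end
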